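/- Let b : ℝ → ℝ^N and a : ℝ → [0,∞) be measurable and suppose that for all ε > 0 and z ∈ ℝ^N, |{ξ : (1/4)|b(ξ) − z|² + a(ξ) < ε}| ≤ ι(4ε) for a nondecreasing ι. Then for every δ > 0 and z ∈ ℝ^N, ∫_ℝ e^{−δ((1/4)|b(ξ)−2πz|² + a(ξ))} dξ ≤ (1/4) ∫₀^∞ e^{−τ/4} ι(τ/δ) dτ. -/

import Mathlib

open MeasureTheory Set Real ENNReal

/-- The layer-cake estimate in the proof of Lemma B.1:
`∫ e^{−δ((1/4)|b(ξ)−2πz|² + a(ξ))} dξ ≤ (1/4) ∫₀^∞ e^{−τ/4} ι(τ/δ) dτ`. -/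
theorem exp_level_set_estimate
    (N : ℕ) (hN : 1 ≤ N)
    (b : ℝ → EuclideanSpace ℝ (Fin N)) (a : ℝ → ℝ)
    (hb : Measurable b) (ha : Measurable a) (ha0 : ∀ ξ, 0 ≤ a ξ)
    (ι : ℝ → ℝ) (hι0 : ∀ ε, 0 ≤ ε → 0 ≤ ι ε)
    (hιmono : MonotoneOn ι (Set.Ici 0))
    (hlevel : ∀ τ > (0:ℝ), ∀ z : EuclideanSpace ℝ (Fin N),
      volume {ξ : ℝ | ‖b ξ - z‖ ^ 2 + a ξ < 4 * τ} ≤ ENNReal.ofReal (ι (4 * τ)))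
    (δ : ℝ) (hδ : 0 < δ) (z : EuclideanSpace ℝ (Fin N)) :
    ∫⁻ ξ : ℝ, ENNReal.ofReal
        (Real.exp (-δ * ((1/4) * ‖b ξ - (2 * Real.pi) • z‖ ^ 2 + a ξ))) ≤
      (1/4 : ℝ≥0∞) * ∫⁻ τ in Set.Ioi (0:ℝ), ENNReal.ofReal (Real.exp (-τ / 4) * ι (τ / δ)) := by
  set w : EuclideanSpace ℝ (Fin N) := (2 * Real.pi) • z with hw
  set f : ℝ → ℝ := fun ξ => (1/4) * ‖b ξ - w‖ ^ 2 + a ξ with hfdef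
  have hf0 : ∀ ξ, 0 ≤ f ξ := fun ξ => add_nonneg (by positivity) (ha0 ξ)
  have hfm : Measurable f :=
    (((hb.sub measurable_const).norm.pow measurable_const).const_mul _).add ha
  -- the extended monotone function
  set J : ℝ → ℝ := fun τ => ι (max τ 0) with hJdef
  have hJmono : Monotone J := fun x y hxy =>
    hιmono (le_max_right x 0) (le_max_right y 0) (max_le_max hxy le_rfl)
  have hJm : Measurable J := hJmono.measurable
  have hJeq : ∀ τ > (0:ℝ), J τ = ι τ := fun τ hτ => by
    simp [hJdef, max_eq_left hτ.le]
  have hJ0 : ∀ τ, 0 ≤ J τ := fun τ => hι0 _ (le_max_right τ 0)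
  -- step 1 : tail integral of the exponential density
  have step1 : ∀ c : ℝ,
      (∫⁻ s in Ioi c, ENNReal.ofReal (δ * Real.exp (-δ * s)))
        = ENNReal.ofReal (Real.exp (-δ * c)) := by
    intro c
    have hint : IntegrableOn (fun s => δ * Real.exp (-δ * s)) (Ioi c) :=
      (exp_neg_integrableOn_Ioi c hδ).const_mul δ
    have hderiv : ∀ x ∈ Ici c, HasDerivAt (fun s : ℝ => -Real.exp (-δ * s))
        (δ * Real.exp (-δ * x)) x := by
      intro x _
      have h1 : HasDerivAt (fun s : ℝ => -δ * s) (-δ) x := by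
        simpa using (hasDerivAt_id x).const_mul (-δ)
      have := (h1.exp).neg
      exact this.congr_deriv (by ring)
    have htend : Filter.Tendsto (fun s : ℝ => -Real.exp (-δ * s)) Filter.atTop (nhds 0) := by
      rw [show (0:ℝ) = -0 by ring]
      exact (Real.tendsto_exp_atBot.comp
        (Filter.Tendsto.const_mul_atTop_of_neg (neg_neg_iff_pos.mpr hδ) Filter.tendsto_id)).neg
    have hcalc : ∫ s in Ioi c, δ * Real.exp (-δ * s) = Real.exp (-δ * c) := by
      rw [integral_Ioi_of_hasDerivAt_of_tendsto' hderiv hint htend]; ring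
    rw [← hcalc]
    rw [← ofReal_integral_eq_lintegral_ofReal hint]
    exact Filter.Eventually.of_forall fun s => by positivity
  -- pointwise layer representation
  have layer : ∀ ξ, ENNReal.ofReal (Real.exp (-δ * f ξ))
      = ∫⁻ s in Ioi (0:ℝ),
          Set.indicator {s : ℝ | f ξ < s} (fun s => ENNReal.ofReal (δ * Real.exp (-δ * s))) s := by
    intro ξ
    have hset : {s : ℝ | f ξ < s} = Ioi (f ξ) := rfl
    rw [hset, lintegral_indicator measurableSet_Ioi,
      Measure.restrict_restrict measurableSet_Ioi]
    rw [Set.Ioi_inter_Ioi, max_eq_left (hf0 ξ)]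
    exact (step1 (f ξ)).symm
  calc
    ∫⁻ ξ : ℝ, ENNReal.ofReal (Real.exp (-δ * ((1/4) * ‖b ξ - w‖ ^ 2 + a ξ)))
        = ∫⁻ ξ : ℝ, ∫⁻ s in Ioi (0:ℝ),
            Set.indicator {s : ℝ | f ξ < s}
              (fun s => ENNReal.ofReal (δ * Real.exp (-δ * s))) s := by
          exact lintegral_congr fun ξ => layer ξ
    _ = ∫⁻ s in Ioi (0:ℝ), ∫⁻ ξ : ℝ,
            Set.indicator {s : ℝ | f ξ < s}
              (fun s => ENNReal.ofReal (δ * Real.exp (-δ * s))) s := by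
          apply lintegral_lintegral_swap
          apply Measurable.aemeasurable
          have huncurry : Function.uncurry (fun ξ s =>
                Set.indicator {s : ℝ | f ξ < s}
                  (fun s => ENNReal.ofReal (δ * Real.exp (-δ * s))) s)
              = Set.indicator {p : ℝ × ℝ | f p.1 < p.2}
                  (fun p => ENNReal.ofReal (δ * Real.exp (-δ * p.2))) := by
            ext p
            by_cases h : f p.1 < p.2 <;>
              simp [Function.uncurry, Set.indicator, h]
          rw [huncurry]
          exact Measurable.indicator
            (ENNReal.measurable_ofReal.comp
              ((measurable_snd.const_mul (-δ)).exp.const_mul δ))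
            (measurableSet_lt (hfm.comp measurable_fst) measurable_snd)
    _ ≤ ∫⁻ s in Ioi (0:ℝ), ENNReal.ofReal (δ * Real.exp (-δ * s) * J (4 * s)) := by
          apply lintegral_mono_ae
          filter_upwards [ae_restrict_mem measurableSet_Ioi] with s hs
          have heq : (fun ξ : ℝ =>
              Set.indicator {s' : ℝ | f ξ < s'}
                (fun s' => ENNReal.ofReal (δ * Real.exp (-δ * s'))) s)
              = Set.indicator {ξ : ℝ | f ξ < s}
                (fun _ => ENNReal.ofReal (δ * Real.exp (-δ * s))) := by
            ext ξ
            by_cases h : f ξ < s <;> simp [Set.indicator, h]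
          rw [heq, lintegral_indicator_const (measurableSet_lt hfm measurable_const)]
          have hsub : {ξ : ℝ | f ξ < s} ⊆ {ξ : ℝ | ‖b ξ - w‖ ^ 2 + a ξ < 4 * s} := by
            intro ξ hξ
            have h1 : (1/4) * ‖b ξ - w‖ ^ 2 + a ξ < s := hξ
            have h2 : 0 ≤ a ξ := ha0 ξ
            have : ‖b ξ - w‖ ^ 2 + a ξ < 4 * s := by nlinarith
            exact this
          have hmeas : volume {ξ : ℝ | f ξ < s} ≤ ENNReal.ofReal (ι (4 * s)) :=
            le_trans (measure_mono hsub) (hlevel s hs w)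
          have hs' : (0:ℝ) < s := mem_Ioi.mp hs
          rw [hJeq _ (by linarith : (0:ℝ) < 4 * s)]
          calc ENNReal.ofReal (δ * Real.exp (-δ * s)) * volume {ξ : ℝ | f ξ < s}
              ≤ ENNReal.ofReal (δ * Real.exp (-δ * s)) * ENNReal.ofReal (ι (4 * s)) := by
                exact mul_le_mul_right hmeas _
            _ = ENNReal.ofReal (δ * Real.exp (-δ * s) * ι (4 * s)) := by
                rw [← ENNReal.ofReal_mul (by positivity)]
    _ = (1/4 : ℝ≥0∞) * ∫⁻ τ in Set.Ioi (0:ℝ), ENNReal.ofReal (Real.exp (-τ / 4) * ι (τ / δ)) := by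
          -- replace ι by J in the RHS integral
          have hRcongr : (∫⁻ τ in Set.Ioi (0:ℝ), ENNReal.ofReal (Real.exp (-τ / 4) * ι (τ / δ)))
              = ∫⁻ τ in Set.Ioi (0:ℝ), ENNReal.ofReal (Real.exp (-τ / 4) * J (τ / δ)) := by
            apply lintegral_congr_ae
            filter_upwards [ae_restrict_mem measurableSet_Ioi] with τ hτ
            rw [hJeq (τ / δ) (div_pos (mem_Ioi.mp hτ) hδ)]
          rw [hRcongr]
          set g : ℝ → ℝ≥0∞ :=
            (Set.Ioi (0:ℝ)).indicator (fun τ => ENNReal.ofReal (Real.exp (-τ / 4) * J (τ / δ)))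
            with hgdef
          have hg : Measurable g := by
            apply Measurable.indicator _ measurableSet_Ioi
            exact ENNReal.measurable_ofReal.comp
              (((measurable_id.neg.div_const 4).exp).mul (hJm.comp (measurable_id.div_const δ)))
          have hRg : (∫⁻ τ in Set.Ioi (0:ℝ), ENNReal.ofReal (Real.exp (-τ / 4) * J (τ / δ)))
              = ∫⁻ τ, g τ := (lintegral_indicator measurableSet_Ioi _).symm
          have hc : (4 * δ) ≠ 0 := by positivity
          have hmap : (∫⁻ s, g ((4 * δ) * s)) = ENNReal.ofReal |(4 * δ)⁻¹| * ∫⁻ τ, g τ := by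
            rw [← lintegral_map hg (measurable_const_mul (4 * δ)),
              Real.map_volume_mul_left hc, lintegral_smul_measure, smul_eq_mul]
          have hcomp : ∀ s : ℝ, g ((4 * δ) * s)
              = (Set.Ioi (0:ℝ)).indicator
                  (fun s => ENNReal.ofReal (Real.exp (-δ * s) * J (4 * s))) s := by
            intro s
            have hmem : (4 * δ) * s ∈ Set.Ioi (0:ℝ) ↔ s ∈ Set.Ioi (0:ℝ) := by
              simp only [Set.mem_Ioi]
              constructor
              · intro h; nlinarith
              · intro h; positivity
            by_cases h : s ∈ Set.Ioi (0:ℝ)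
            · rw [hgdef]
              rw [Set.indicator_of_mem (hmem.mpr h), Set.indicator_of_mem h]
              congr 2
              · ring
              · congr 1
                field_simp
            · rw [hgdef, Set.indicator_of_notMem (fun hh => h (hmem.mp hh)),
                Set.indicator_of_notMem h]
          have hLHS : (∫⁻ s in Set.Ioi (0:ℝ), ENNReal.ofReal (δ * Real.exp (-δ * s) * J (4 * s)))
              = ENNReal.ofReal δ * ∫⁻ s, g ((4 * δ) * s) := by
            have : ∀ s : ℝ, ENNReal.ofReal (δ * Real.exp (-δ * s) * J (4 * s))
                = ENNReal.ofReal δ * ENNReal.ofReal (Real.exp (-δ * s) * J (4 * s)) := by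
              intro s
              rw [mul_assoc, ENNReal.ofReal_mul hδ.le]
            rw [lintegral_congr this, lintegral_const_mul' _ _ ENNReal.ofReal_ne_top,
              ← lintegral_indicator measurableSet_Ioi]
            congr 1
            exact lintegral_congr fun s => (hcomp s).symm
          rw [hLHS, hmap, hRg, ← mul_assoc]
          congr 1
          rw [← ENNReal.ofReal_mul hδ.le]
          rw [abs_of_pos (by positivity : (0:ℝ) < (4 * δ)⁻¹)]
          rw [show δ * (4 * δ)⁻¹ = 1/4 by field_simp]
          rw [ENNReal.ofReal_div_of_pos (by norm_num)]
          norm_num
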